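/- arXiv:1508.00772 — 3 statements merged into one kernel-verified Lean document; each statement's English description precedes it below -/
import Mathlib

section
/- Let g be any function of partitions (with values in a commutative ring, e.g. ℚ) and let μ be a fixed partition. Then for every nonnegative integer n, Σ_{|λ/μ|=n} f_{λ/μ} · g(λ) = Σ_{k=0}^{n} C(n,k) · D^k g(μ), where the left-hand sum ranges over all partitions λ containing μ with |λ| − |μ| = n. -/
open scoped Classical

namespace HookDiff

/-- The hook length of the box `c` in the Young diagram `μ`: the number of boxes
directly to its right, directly below/above it in its column, plus the box itself. -/
def hook (μ : YoungDiagram) (c : ℕ × ℕ) : ℕ :=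
  (μ.cells.filter (fun d => (d.1 = c.1 ∧ c.2 ≤ d.2) ∨ (d.2 = c.2 ∧ c.1 ≤ d.1))).card

/-- `H μ` is the product of all hook lengths of `μ`. -/
def H (μ : YoungDiagram) : ℚ := ∏ c ∈ μ.cells, (hook μ c : ℚ)

/-- The cells that can be added to `μ` to produce a Young diagram (inner corners). -/
noncomputable def addables (μ : YoungDiagram) : Finset (ℕ × ℕ) :=
  (Finset.range (μ.card + 1) ×ˢ Finset.range (μ.card + 1)).filter
    (fun c => c ∉ μ ∧ IsLowerSet (↑(insert c μ.cells) : Set (ℕ × ℕ)))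

/-- Add a box at cell `c` to `μ` (junk value `μ` if the result is not a diagram). -/
noncomputable def addBox (μ : YoungDiagram) (c : ℕ × ℕ) : YoungDiagram :=
  if h : IsLowerSet (↑(insert c μ.cells) : Set (ℕ × ℕ)) then ⟨insert c μ.cells, h⟩ else μ

/-- The cells that can be removed from `μ` leaving a Young diagram (outer corners). -/
noncomputable def removables (μ : YoungDiagram) : Finset (ℕ × ℕ) :=
  μ.cells.filter (fun c => IsLowerSet (↑(μ.cells.erase c) : Set (ℕ × ℕ)))

/-- Remove the box at cell `c` from `μ` (junk value `μ` if the result is not a diagram). -/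
noncomputable def removeBox (μ : YoungDiagram) (c : ℕ × ℕ) : YoungDiagram :=
  if h : IsLowerSet (↑(μ.cells.erase c) : Set (ℕ × ℕ)) then ⟨μ.cells.erase c, h⟩ else μ

/-- The difference operator `D`: `Dg(λ) = Σ_{λ⁺} g(λ⁺) − g(λ)`, where `λ⁺` runs over
all partitions obtained from `λ` by adding one box. -/
noncomputable def D (g : YoungDiagram → ℚ) : YoungDiagram → ℚ :=
  fun μ => (∑ c ∈ addables μ, g (addBox μ c)) - g μ

/-- The difference operator `D⁻`: `D⁻g(λ) = |λ|·g(λ) − Σ_{λ⁻} g(λ⁻)`, where `λ⁻` runs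
over all partitions obtained from `λ` by removing one box. -/
noncomputable def Dminus (g : YoungDiagram → ℚ) : YoungDiagram → ℚ :=
  fun μ => (μ.card : ℚ) * g μ - ∑ c ∈ removables μ, g (removeBox μ c)

/-- `fskew n μ λ` is the number of standard Young tableaux of skew shape `λ/μ`
(with `n = |λ| - |μ|`), i.e. the number of chains `μ = ν₀ ⊂ ν₁ ⊂ ⋯ ⊂ ν_n = λ`
in which each diagram is obtained from the previous one by adding a single box. -/
noncomputable def fskew : ℕ → YoungDiagram → YoungDiagram → ℕ
  | 0, μ, l => if μ = l then 1 else 0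
  | n + 1, μ, l => ∑ c ∈ addables μ, fskew n (addBox μ c) l

/-- `f_λ`, the number of standard Young tableaux of shape `λ`. -/
noncomputable def f (l : YoungDiagram) : ℕ := fskew l.card ⊥ l

/-- `S(λ, r) = Σ_{□∈λ} ∏_{j=1}^{r} (h_□² − j²)`. -/
def S (l : YoungDiagram) (r : ℕ) : ℚ :=
  ∑ c ∈ l.cells, ∏ j ∈ Finset.Icc 1 r, ((hook l c : ℚ) ^ 2 - (j : ℚ) ^ 2)

/-- `K_r = (2r)!·(2r+1)! / (r!·(r+1)!²)`. -/
def K (r : ℕ) : ℚ :=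
  ((2 * r).factorial : ℚ) * ((2 * r + 1).factorial : ℚ) /
    ((r.factorial : ℚ) * ((r + 1).factorial : ℚ) ^ 2)

/-- The content of the box `c = (i, j)` is `j - i`. -/
def content (c : ℕ × ℕ) : ℚ := (c.2 : ℚ) - (c.1 : ℚ)

/-- `C(λ, r) = Σ_{□∈λ} ∏_{j=0}^{r-1} (c_□² − j²)`. -/
def Ccont (l : YoungDiagram) (r : ℕ) : ℚ :=
  ∑ c ∈ l.cells, ∏ j ∈ Finset.range r, (content c ^ 2 - (j : ℚ) ^ 2)


/-! ### Auxiliary lemmas for the proof -/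

lemma mem_addables' {μ : YoungDiagram} {c : ℕ × ℕ} (h : c ∈ addables μ) :
    c ∉ μ ∧ IsLowerSet (↑(insert c μ.cells) : Set (ℕ × ℕ)) := by
  simp only [addables, Finset.mem_filter] at h; tauto

lemma addBox_cells {μ : YoungDiagram} {c : ℕ × ℕ} (h : c ∈ addables μ) :
    (addBox μ c).cells = insert c μ.cells := by
  rw [addBox, dif_pos (mem_addables' h).2]

lemma le_addBox {μ : YoungDiagram} {c : ℕ × ℕ} (h : c ∈ addables μ) : μ ≤ addBox μ c := by
  intro x hx
  show x ∈ (addBox μ c).cells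
  rw [addBox_cells h]
  exact Finset.mem_insert_of_mem hx

lemma addBox_card {μ : YoungDiagram} {c : ℕ × ℕ} (h : c ∈ addables μ) :
    (addBox μ c).card = μ.card + 1 := by
  rw [YoungDiagram.card, addBox_cells h,
    Finset.card_insert_of_notMem (by rw [YoungDiagram.mem_cells]; exact (mem_addables' h).1)]

lemma cell_lt_card {l : YoungDiagram} {c : ℕ × ℕ} (h : c ∈ l) : c.1 < l.card ∧ c.2 < l.card := by
  constructor
  · have hsub : (Finset.range (c.1 + 1)).image (fun k => (k, c.2)) ⊆ l.cells := by
      intro x hx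
      simp only [Finset.mem_image, Finset.mem_range] at hx
      obtain ⟨k, hk, rfl⟩ := hx
      exact l.up_left_mem (Nat.lt_succ_iff.mp hk) le_rfl h
    have := Finset.card_le_card hsub
    rwa [Finset.card_image_of_injective _ (fun a b hab => by simpa using hab),
      Finset.card_range, Nat.succ_le_iff] at this
  · have hsub : (Finset.range (c.2 + 1)).image (fun k => (c.1, k)) ⊆ l.cells := by
      intro x hx
      simp only [Finset.mem_image, Finset.mem_range] at hx
      obtain ⟨k, hk, rfl⟩ := hx
      exact l.up_left_mem le_rfl (Nat.lt_succ_iff.mp hk) h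
    have := Finset.card_le_card hsub
    rwa [Finset.card_image_of_injective _ (fun a b hab => by simpa using hab),
      Finset.card_range, Nat.succ_le_iff] at this

lemma finite_card (m : ℕ) : {l : YoungDiagram | l.card = m}.Finite := by
  apply Set.Finite.of_finite_image (f := fun l => l.cells)
  · apply Set.Finite.subset
      (((Finset.range m ×ˢ Finset.range m).powerset : Finset (Finset (ℕ × ℕ))).finite_toSet)
    rintro s ⟨l, hl, rfl⟩
    simp only [Finset.mem_coe, Finset.mem_powerset]
    intro c hc
    have := cell_lt_card (l := l) (c := c) (by rwa [← YoungDiagram.mem_cells])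
    simp [Finset.mem_product, hl ▸ this.1, hl ▸ this.2]
  · intro a _ b _ hab
    exact YoungDiagram.ext hab

lemma fskew_ne_zero : ∀ (n : ℕ) (μ l : YoungDiagram), fskew n μ l ≠ 0 →
    μ ≤ l ∧ l.card = μ.card + n
  | 0, μ, l, h => by
    rw [fskew] at h
    split_ifs at h with heq
    · subst heq; exact ⟨le_rfl, by simp⟩
    · exact absurd rfl h
  | n + 1, μ, l, h => by
    rw [fskew] at h
    obtain ⟨c, hc, hne⟩ := Finset.exists_ne_zero_of_sum_ne_zero h
    obtain ⟨h1, h2⟩ := fskew_ne_zero n _ l hne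
    refine ⟨le_trans (le_addBox hc) h1, ?_⟩
    rw [h2, addBox_card hc]; ring

lemma pascal_sum (n : ℕ) (a : ℕ → ℚ) :
    ∑ k ∈ Finset.range (n + 1), (n.choose k : ℚ) * (a (k + 1) + a k)
      = ∑ k ∈ Finset.range (n + 2), ((n + 1).choose k : ℚ) * a k := by
  have h3 : ∑ k ∈ Finset.range (n + 1), (n.choose (k + 1) : ℚ) * a (k + 1)
      = ∑ k ∈ Finset.range n, (n.choose (k + 1) : ℚ) * a (k + 1) := by
    rw [Finset.sum_range_succ, Nat.choose_eq_zero_of_lt (by omega)]; simp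
  calc ∑ k ∈ Finset.range (n + 1), (n.choose k : ℚ) * (a (k + 1) + a k)
      = (∑ k ∈ Finset.range (n + 1), (n.choose k : ℚ) * a (k + 1))
        + ∑ k ∈ Finset.range (n + 1), (n.choose k : ℚ) * a k := by
        rw [← Finset.sum_add_distrib]
        exact Finset.sum_congr rfl (fun k _ => by ring)
    _ = (∑ k ∈ Finset.range (n + 1), (n.choose k : ℚ) * a (k + 1))
        + ((∑ k ∈ Finset.range n, (n.choose (k + 1) : ℚ) * a (k + 1))
            + (n.choose 0 : ℚ) * a 0) := by
        rw [Finset.sum_range_succ' (fun k => (n.choose k : ℚ) * a k) n]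
    _ = (∑ k ∈ Finset.range (n + 1),
          ((n.choose k : ℚ) * a (k + 1) + (n.choose (k + 1) : ℚ) * a (k + 1))) + a 0 := by
        rw [Finset.sum_add_distrib, ← h3, Nat.choose_zero_right]
        push_cast; ring
    _ = (∑ k ∈ Finset.range (n + 1), (((n + 1).choose (k + 1) : ℚ)) * a (k + 1))
        + ((n + 1).choose 0 : ℚ) * a 0 := by
        rw [Nat.choose_zero_right]
        push_cast
        congr 1
        · exact Finset.sum_congr rfl (fun k _ => by
            rw [Nat.choose_succ_succ]; push_cast; ring)
        · ring
    _ = ∑ k ∈ Finset.range (n + 2), ((n + 1).choose k : ℚ) * a k :=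
        (Finset.sum_range_succ' (fun k => ((n + 1).choose k : ℚ) * a k) (n + 1)).symm

/-- For any function `g` of partitions and fixed partition `μ`,
`Σ_{|λ/μ|=n} f_{λ/μ} g(λ) = Σ_{k=0}^{n} C(n,k) D^k g(μ)`. -/
theorem sum_skew_eq_sum_D (g : YoungDiagram → ℚ) (μ : YoungDiagram) (n : ℕ) :
    (∑ᶠ l ∈ {l : YoungDiagram | μ ≤ l ∧ l.card = μ.card + n}, (fskew n μ l : ℚ) * g l)
      = ∑ k ∈ Finset.range (n + 1), (n.choose k : ℚ) * D^[k] g μ := by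
  induction n generalizing μ with
  | zero =>
    have hset : {l : YoungDiagram | μ ≤ l ∧ l.card = μ.card + 0} = {μ} := by
      ext l
      simp only [Set.mem_setOf_eq, Set.mem_singleton_iff]
      constructor
      · rintro ⟨h1, h2⟩
        have hsub : μ.cells ⊆ l.cells := fun x hx =>
          (YoungDiagram.mem_cells _).2 (h1 ((YoungDiagram.mem_cells _).1 hx))
        exact (YoungDiagram.ext (Finset.eq_of_subset_of_card_le hsub (by simp only [YoungDiagram.card] at h2; omega))).symm
      · rintro rfl; exact ⟨le_rfl, by simp⟩
    rw [hset, finsum_mem_singleton]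
    simp [fskew]
  | succ n ih =>
    have hS : {l : YoungDiagram | μ ≤ l ∧ l.card = μ.card + (n + 1)}.Finite :=
      (finite_card (μ.card + (n + 1))).subset (fun l hl => hl.2)
    have hS' : ∀ c : ℕ × ℕ,
        {l : YoungDiagram | addBox μ c ≤ l ∧ l.card = (addBox μ c).card + n}.Finite :=
      fun c => (finite_card _).subset (fun l hl => hl.2)
    rw [← hS.coe_toFinset, finsum_mem_coe_finset]
    have step1 : ∑ l ∈ hS.toFinset, (fskew (n + 1) μ l : ℚ) * g l
        = ∑ c ∈ addables μ, ∑ l ∈ hS.toFinset, (fskew n (addBox μ c) l : ℚ) * g l := by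
      rw [Finset.sum_comm]
      refine Finset.sum_congr rfl (fun l _ => ?_)
      rw [fskew]
      push_cast
      rw [Finset.sum_mul]
    rw [step1]
    have step2 : ∀ c ∈ addables μ,
        ∑ l ∈ hS.toFinset, (fskew n (addBox μ c) l : ℚ) * g l
          = ∑ k ∈ Finset.range (n + 1), (n.choose k : ℚ) * D^[k] g (addBox μ c) := by
      intro c hc
      have hsub : (hS' c).toFinset ⊆ hS.toFinset := by
        intro l hl
        rw [Set.Finite.mem_toFinset] at hl ⊢
        exact ⟨le_trans (le_addBox hc) hl.1, by rw [hl.2, addBox_card hc]; ring⟩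
      have hzero : ∀ l ∈ hS.toFinset, l ∉ (hS' c).toFinset →
          (fskew n (addBox μ c) l : ℚ) * g l = 0 := by
        intro l _ hl
        rw [Set.Finite.mem_toFinset] at hl
        have hz : fskew n (addBox μ c) l = 0 := by
          by_contra hne
          exact hl (fskew_ne_zero n _ l hne)
        rw [hz]; simp
      rw [← Finset.sum_subset hsub hzero, ← finsum_mem_coe_finset, (hS' c).coe_toFinset,
        ih (addBox μ c)]
    rw [Finset.sum_congr rfl step2, Finset.sum_comm]
    have hD : ∀ k : ℕ, ∑ c ∈ addables μ, D^[k] g (addBox μ c)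
        = D^[k + 1] g μ + D^[k] g μ := by
      intro k
      rw [Function.iterate_succ_apply']
      simp only [D]
      ring
    calc ∑ k ∈ Finset.range (n + 1), ∑ c ∈ addables μ, (n.choose k : ℚ) * D^[k] g (addBox μ c)
        = ∑ k ∈ Finset.range (n + 1),
            (n.choose k : ℚ) * (D^[k + 1] g μ + D^[k] g μ) := by
          refine Finset.sum_congr rfl (fun k _ => ?_)
          rw [← Finset.mul_sum, hD k]
      _ = ∑ k ∈ Finset.range (n + 2), ((n + 1).choose k : ℚ) * D^[k] g μ :=
          pascal_sum n (fun k => D^[k] g μ)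

end HookDiff
end

section
/- Let g be a rational-valued function of partitions. Then D⁻g(λ) = 0 for every partition λ if and only if there is a constant a ∈ ℚ such that g(λ) = a/H_λ for every partition λ. -/
open scoped Classical

namespace HookDiff

set_option linter.unusedSectionVars false



open Finset

section Poly
open Polynomial Lagrange


variable {ι : Type*} [DecidableEq ι]

lemma shift_sum (t : Finset ι) (v : ι → ℚ) : ∑ i ∈ t, (v i + 1) = ∑ i ∈ t, v i + t.card := by
  rw [Finset.sum_add_distrib, Finset.sum_const, nsmul_eq_mul, mul_one]

lemma delta_degree (s : Finset ι) (v : ι → ℚ) :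
    (nodal s (fun i => v i + 1) - nodal s v).degree < (s.card : WithBot ℕ) := by
  have h := Polynomial.degree_sub_lt (p := nodal s (fun i => v i + 1)) (q := nodal s v)
    (by rw [degree_nodal, degree_nodal]) nodal_ne_zero
    (nodal_monic.leadingCoeff.trans nodal_monic.leadingCoeff.symm)
  rwa [degree_nodal] at h

lemma delta_coeff_top (s : Finset ι) (v : ι → ℚ) (k : ℕ) (hk : s.card = k + 1) :
    (nodal s (fun i => v i + 1) - nodal s v).coeff k = -(k + 1) := by
  have h1 := prod_X_sub_C_coeff_card_pred s (fun i => v i + 1) (by omega)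
  have h2 := prod_X_sub_C_coeff_card_pred s v (by omega)
  rw [hk] at h1 h2
  simp only [Nat.add_sub_cancel] at h1 h2
  rw [nodal_eq, nodal_eq, coeff_sub, h1, h2, shift_sum, hk]
  push_cast
  ring

lemma delta_coeff_sub2 (s : Finset ι) (v : ι → ℚ) : ∀ (k : ℕ), s.card = k + 2 →
    (nodal s (fun i => v i + 1) - nodal s v).coeff k
      = (k + 1) * ∑ i ∈ s, v i + (k + 2) * (k + 1) / 2 := by
  induction s using Finset.cons_induction with
  | empty => intro k hk; simp at hk
  | cons a t ha ih =>
    intro k hk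
    rw [Finset.card_cons] at hk
    have htc : t.card = k + 1 := by omega
    have hsplit : nodal (cons a t ha) (fun i => v i + 1) - nodal (cons a t ha) v
        = (X - C (v a)) * (nodal t (fun i => v i + 1) - nodal t v)
          - nodal t (fun i => v i + 1) := by
      rw [nodal_eq, nodal_eq, Finset.prod_cons, Finset.prod_cons, ← nodal_eq, ← nodal_eq,
        show (C (v a + 1) : ℚ[X]) = C (v a) + C 1 by rw [map_add], C_1]
      ring
    rw [hsplit]
    set Δ := nodal t (fun i => v i + 1) - nodal t v with hΔ
    have hDk : Δ.coeff k = -(k + 1) := delta_coeff_top t v k htc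
    have hP1k : (nodal t (fun i => v i + 1)).coeff k = -(∑ i ∈ t, v i) - (k + 1) := by
      have h1 := prod_X_sub_C_coeff_card_pred t (fun i => v i + 1) (by omega)
      rw [htc] at h1
      simp only [Nat.add_sub_cancel] at h1
      rw [nodal_eq, h1, shift_sum, htc]
      push_cast
      ring
    have hmul : ((X - C (v a)) * Δ).coeff k = (X * Δ).coeff k - v a * Δ.coeff k := by
      rw [sub_mul, coeff_sub, coeff_C_mul]
    rw [coeff_sub, hmul, hP1k, hDk]
    rcases Nat.eq_zero_or_pos k with hk0 | hkpos
    · subst hk0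
      rw [show ((X : ℚ[X]) * Δ).coeff 0 = 0 by rw [mul_comm, coeff_mul_X_zero]]
      rw [Finset.sum_cons]
      push_cast
      ring
    · obtain ⟨m, rfl⟩ : ∃ m, k = m + 1 := ⟨k - 1, by omega⟩
      rw [coeff_X_mul, ih m (by omega), Finset.sum_cons]
      push_cast
      ring

lemma sum_hook_ratio_identity (s : Finset ι) (v : ι → ℚ) (hv : Set.InjOn v s) :
    ∑ i ∈ s, v i * ∏ j ∈ s.erase i, ((v i - v j - 1) / (v i - v j))
      = ∑ i ∈ s, v i - (s.card : ℚ) * ((s.card : ℚ) - 1) / 2 := by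
  rcases s.eq_empty_or_nonempty with rfl | hs
  · simp
  obtain ⟨k, hk⟩ : ∃ k, s.card = k + 1 := ⟨s.card - 1, by have := hs.card_pos; omega⟩
  set P : ℚ[X] := nodal s v with hP
  set Δ : ℚ[X] := nodal s (fun i => v i + 1) - nodal s v with hΔ
  set R : ℚ[X] := X * Δ + C (s.card : ℚ) * P with hR
  set r : ι → ℚ := fun i => v i * ∏ j ∈ s, (v i - v j - 1) with hr
  -- degree bound
  have hdeg : R.degree < (s.card : WithBot ℕ) := by
    rw [Polynomial.degree_lt_iff_coeff_zero]
    intro m hm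
    rw [coeff_add, coeff_C_mul]
    rcases Nat.lt_or_ge s.card m with hlt | hge
    · obtain ⟨m', rfl⟩ : ∃ m', m = m' + 1 := ⟨m - 1, by omega⟩
      rw [coeff_X_mul]
      have h1 : Δ.coeff m' = 0 := by
        apply coeff_eq_zero_of_degree_lt
        exact lt_of_lt_of_le (delta_degree s v) (by exact_mod_cast (by omega : s.card ≤ m'))
      have h2 : P.coeff (m' + 1) = 0 := by
        apply coeff_eq_zero_of_natDegree_lt
        rw [hP, natDegree_nodal]; omega
      rw [h1, h2]; ring
    · have hm' : m = s.card := le_antisymm hge hm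
      subst hm'
      rw [hk, coeff_X_mul, delta_coeff_top s v k hk]
      have h2 : P.coeff (k + 1) = 1 := by
        have : P.natDegree = k + 1 := by rw [hP, natDegree_nodal, hk]
        rw [← this]
        exact nodal_monic.coeff_natDegree
      rw [h2]
      push_cast
      ring
  -- eval
  have heval : ∀ i ∈ s, R.eval (v i) = r i := by
    intro i hi
    rw [hR]
    simp only [eval_add, eval_mul, eval_X, eval_C]
    rw [hP, hΔ, eval_sub, eval_nodal_at_node hi, eval_nodal]
    rw [hr]
    simp only [mul_zero, add_zero, sub_zero]
    congr 1
    exact Finset.prod_congr rfl (fun j _ => by ring)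
  have hinterp : R = interpolate s v r :=
    eq_interpolate_of_eval_eq r hv hdeg heval
  -- coefficient k of both sides
  have hcl : R.coeff k = -(∑ i ∈ s, v i) + (k + 1) * k / 2 := by
    rw [hR, coeff_add, coeff_C_mul]
    have hPk : P.coeff k = -(∑ i ∈ s, v i) := by
      have h1 := prod_X_sub_C_coeff_card_pred s v (by omega)
      rw [hk] at h1
      simp only [Nat.add_sub_cancel] at h1
      rw [hP, nodal_eq, h1]
    rcases Nat.eq_zero_or_pos k with hk0 | hkpos
    · subst hk0
      rw [show ((X : ℚ[X]) * Δ).coeff 0 = 0 by rw [mul_comm, coeff_mul_X_zero], hPk, hk]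
      push_cast; ring
    · obtain ⟨m, rfl⟩ : ∃ m, k = m + 1 := ⟨k - 1, by omega⟩
      rw [coeff_X_mul, delta_coeff_sub2 s v m (by omega), hPk, hk]
      push_cast; ring
  have hcr : (interpolate s v r).coeff k = -∑ i ∈ s, v i * ∏ j ∈ s.erase i,
      ((v i - v j - 1) / (v i - v j)) := by
    rw [interpolate_apply, finset_sum_coeff, ← Finset.sum_neg_distrib]
    apply Finset.sum_congr rfl
    intro i hi
    rw [coeff_C_mul]
    have hbasis : (Lagrange.basis s v i).coeff k = ∏ j ∈ s.erase i, (v i - v j)⁻¹ := by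
      rw [Lagrange.basis]
      have : ∀ j ∈ s.erase i, basisDivisor (v i) (v j) = C (v i - v j)⁻¹ * (X - C (v j)) :=
        fun j _ => rfl
      rw [Finset.prod_congr rfl this, Finset.prod_mul_distrib, ← map_prod, coeff_C_mul,
        ← nodal_eq]
      have hcard : (s.erase i).card = k := by rw [Finset.card_erase_of_mem hi]; omega
      have hco : (nodal (s.erase i) v).coeff k = 1 := by
        have hnd : (nodal (s.erase i) v).natDegree = k := by rw [natDegree_nodal, hcard]
        rw [← hnd]; exact nodal_monic.coeff_natDegree
      rw [hco, mul_one]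
    rw [hbasis, hr]
    have hsplit : ∏ j ∈ s, (v i - v j - 1) = -(∏ j ∈ s.erase i, (v i - v j - 1)) := by
      rw [← Finset.mul_prod_erase s _ hi]; ring
    simp only
    rw [hsplit]
    rw [show ∏ j ∈ s.erase i, ((v i - v j - 1) / (v i - v j))
        = (∏ j ∈ s.erase i, (v i - v j - 1)) * ∏ j ∈ s.erase i, (v i - v j)⁻¹ from by
      rw [← Finset.prod_mul_distrib]
      exact Finset.prod_congr rfl fun j _ => div_eq_mul_inv _ _]
    ring
  have := hcl.symm.trans (hinterp ▸ hcr)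
  have hgoal : ∑ i ∈ s, v i * ∏ j ∈ s.erase i, ((v i - v j - 1) / (v i - v j))
      = ∑ i ∈ s, v i - (k + 1) * k / 2 := by linarith
  rw [hgoal, hk]
  push_cast
  ring

end Poly

lemma hook_eq {μ : YoungDiagram} {i j : ℕ} (hij : (i, j) ∈ μ) :
    hook μ (i, j) = (μ.rowLen i - j) + (μ.colLen j - (i + 1)) := by
  have hr : j < μ.rowLen i := YoungDiagram.mem_iff_lt_rowLen.mp hij
  have hc : i < μ.colLen j := YoungDiagram.mem_iff_lt_colLen.mp hij
  rw [hook]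
  have hfo : μ.cells.filter
        (fun d => (d.1 = (i,j).1 ∧ (i,j).2 ≤ d.2) ∨ (d.2 = (i,j).2 ∧ (i,j).1 ≤ d.1))
      = (μ.cells.filter (fun d => d.1 = i ∧ j ≤ d.2))
        ∪ (μ.cells.filter (fun d => d.2 = j ∧ i ≤ d.1)) := by
    rw [← Finset.filter_or]
  have hA : μ.cells.filter (fun d => d.1 = i ∧ j ≤ d.2)
      = (Finset.Ico j (μ.rowLen i)).image (fun t => (i, t)) := by
    ext ⟨a, b⟩
    simp only [Finset.mem_filter, YoungDiagram.mem_cells, Finset.mem_image, Finset.mem_Ico]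
    constructor
    · rintro ⟨hm, rfl, hjb⟩
      exact ⟨b, ⟨hjb, YoungDiagram.mem_iff_lt_rowLen.mp hm⟩, rfl⟩
    · rintro ⟨t, ⟨hjt, htr⟩, heq⟩
      injection heq with h1 h2
      subst h1; subst h2
      exact ⟨YoungDiagram.mem_iff_lt_rowLen.mpr htr, rfl, hjt⟩
  have hB : μ.cells.filter (fun d => d.2 = j ∧ i ≤ d.1)
      = (Finset.Ico i (μ.colLen j)).image (fun t => (t, j)) := by
    ext ⟨a, b⟩
    simp only [Finset.mem_filter, YoungDiagram.mem_cells, Finset.mem_image, Finset.mem_Ico]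
    constructor
    · rintro ⟨hm, rfl, hib⟩
      exact ⟨a, ⟨hib, YoungDiagram.mem_iff_lt_colLen.mp hm⟩, rfl⟩
    · rintro ⟨t, ⟨hit, htc⟩, heq⟩
      injection heq with h1 h2
      subst h1; subst h2
      exact ⟨YoungDiagram.mem_iff_lt_colLen.mpr htc, rfl, hit⟩
  have hAB : (μ.cells.filter (fun d => d.1 = i ∧ j ≤ d.2))
      ∩ (μ.cells.filter (fun d => d.2 = j ∧ i ≤ d.1)) = {(i, j)} := by
    ext ⟨a, b⟩
    simp only [Finset.mem_inter, Finset.mem_filter, YoungDiagram.mem_cells,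
      Finset.mem_singleton, Prod.mk.injEq]
    constructor
    · rintro ⟨⟨_, rfl, hjb⟩, ⟨_, rfl, hia⟩⟩
      exact ⟨rfl, rfl⟩
    · rintro ⟨rfl, rfl⟩
      exact ⟨⟨hij, rfl, le_refl _⟩, ⟨hij, rfl, le_refl _⟩⟩
  have hcardA : (μ.cells.filter (fun d => d.1 = i ∧ j ≤ d.2)).card = μ.rowLen i - j := by
    rw [hA, Finset.card_image_of_injective _ (fun a b hab => by injection hab),
      Nat.card_Ico]
  have hcardB : (μ.cells.filter (fun d => d.2 = j ∧ i ≤ d.1)).card = μ.colLen j - i := by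
    rw [hB, Finset.card_image_of_injective _ (fun a b hab => by injection hab),
      Nat.card_Ico]
  have hcu := Finset.card_union_add_card_inter
    (μ.cells.filter (fun d => d.1 = i ∧ j ≤ d.2))
    (μ.cells.filter (fun d => d.2 = j ∧ i ≤ d.1))
  rw [hAB, hcardA, hcardB, Finset.card_singleton] at hcu
  rw [hfo]
  omega

lemma cell_fst_lt {μ : YoungDiagram} {c : ℕ × ℕ} (hc : c ∈ μ) : c.1 < μ.colLen 0 := by
  rw [← YoungDiagram.mem_iff_lt_colLen (i := c.1) (j := 0)]
  exact μ.up_left_mem (le_refl _) (Nat.zero_le _) hc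

lemma cells_biUnion (μ : YoungDiagram) {n : ℕ} (hn : μ.colLen 0 ≤ n) :
    μ.cells = (range n).biUnion (fun i => μ.row i) := by
  ext c
  simp only [Finset.mem_biUnion, Finset.mem_range, YoungDiagram.mem_cells,
    YoungDiagram.mem_row_iff]
  constructor
  · intro hc
    exact ⟨c.1, lt_of_lt_of_le (cell_fst_lt hc) hn, hc, rfl⟩
  · rintro ⟨i, _, hc, _⟩
    exact hc

lemma rows_disjoint (μ : YoungDiagram) : ∀ a ∈ range n, ∀ b ∈ range n, a ≠ b →
    Disjoint (μ.row a) (μ.row b) := by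
  intro a _ b _ hab
  simp only [Finset.disjoint_left]
  intro c hca hcb
  rw [YoungDiagram.mem_row_iff] at hca hcb
  exact hab (hca.2 ▸ hcb.2)

lemma prod_cells {M : Type*} [CommMonoid M] (μ : YoungDiagram) {n : ℕ} (hn : μ.colLen 0 ≤ n)
    (f : ℕ × ℕ → M) :
    ∏ c ∈ μ.cells, f c = ∏ i ∈ range n, ∏ j ∈ range (μ.rowLen i), f (i, j) := by
  rw [cells_biUnion μ hn, Finset.prod_biUnion]
  · apply Finset.prod_congr rfl
    intro i _
    rw [YoungDiagram.row_eq_prod, Finset.singleton_product, Finset.prod_map]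
    rfl
  · exact rows_disjoint μ

lemma card_eq_sum_rowLens' (μ : YoungDiagram) {n : ℕ} (hn : μ.colLen 0 ≤ n) :
    μ.card = ∑ i ∈ range n, μ.rowLen i := by
  show μ.cells.card = _
  rw [cells_biUnion μ hn, Finset.card_biUnion (rows_disjoint μ)]
  exact Finset.sum_congr rfl fun i _ => (μ.rowLen_eq_card).symm



lemma row_factorial (μ : YoungDiagram) {n i : ℕ} (hn : μ.colLen 0 ≤ n) (hi : i < n) :
    (μ.rowLen i + (n - 1 - i)).factorial
      = (∏ j ∈ range (μ.rowLen i), hook μ (i, j))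
        * ∏ k ∈ Ico (i + 1) n, ((μ.rowLen i + (n - 1 - i)) - (μ.rowLen k + (n - 1 - k))) := by
  set L := μ.rowLen i with hL
  have hcolle : ∀ j, μ.colLen j ≤ n := fun j =>
    le_trans (μ.colLen_anti 0 j (Nat.zero_le _)) hn
  have hmem : ∀ j, j < L → (i, j) ∈ μ := fun j hj => YoungDiagram.mem_iff_lt_rowLen.mpr hj
  have hige : ∀ j, j < L → i + 1 ≤ μ.colLen j := fun j hj =>
    YoungDiagram.mem_iff_lt_colLen.mp (hmem j hj)
  have hcanti : ∀ j j', j ≤ j' → μ.colLen j' ≤ μ.colLen j := fun j j' h => μ.colLen_anti j j' h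
  have hranti : ∀ k k', k ≤ k' → μ.rowLen k' ≤ μ.rowLen k := fun k k' h => μ.rowLen_anti k k' h
  set A := (range L).image (fun j => hook μ (i, j)) with hA
  set B := (Ico (i + 1) n).image (fun k => (L + (n - 1 - i)) - (μ.rowLen k + (n - 1 - k)))
    with hB
  have hookval : ∀ j, j < L → hook μ (i, j) = (L - j) + (μ.colLen j - (i + 1)) :=
    fun j hj => hook_eq (hmem j hj)
  have hinjA : Set.InjOn (fun j => hook μ (i, j)) (range L) := by
    intro j hj j' hj' heq
    simp only [Finset.coe_range, Set.mem_Iio] at hj hj'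
    simp only at heq
    rw [hookval j hj, hookval j' hj'] at heq
    rcases lt_trichotomy j j' with h | h | h
    · have := hcanti j j' (le_of_lt h); have := hige j' hj'; omega
    · exact h
    · have := hcanti j' j (le_of_lt h); have := hige j hj; omega
  have hinjB : Set.InjOn (fun k => (L + (n - 1 - i)) - (μ.rowLen k + (n - 1 - k)))
      (Ico (i + 1) n) := by
    intro k hk k' hk' heq
    simp only [Finset.coe_Ico, Set.mem_Ico] at hk hk'
    simp only at heq
    rcases lt_trichotomy k k' with h | h | h
    · have := hranti i k (by omega); have := hranti i k' (by omega)
      have := hranti k k' (le_of_lt h); omega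
    · exact h
    · have := hranti i k (by omega); have := hranti i k' (by omega)
      have := hranti k' k (le_of_lt h); omega
  have hAsub : A ⊆ Icc 1 (L + (n - 1 - i)) := by
    intro t ht
    rw [hA, Finset.mem_image] at ht
    obtain ⟨j, hj, rfl⟩ := ht
    rw [Finset.mem_range] at hj
    rw [hookval j hj, Finset.mem_Icc]
    have := hcolle j; have := hige j hj
    omega
  have hBsub : B ⊆ Icc 1 (L + (n - 1 - i)) := by
    intro t ht
    rw [hB, Finset.mem_image] at ht
    obtain ⟨k, hk, rfl⟩ := ht
    rw [Finset.mem_Ico] at hk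
    have := hranti i k (by omega)
    rw [Finset.mem_Icc]
    omega
  have hdisj : Disjoint A B := by
    rw [Finset.disjoint_left]
    intro t htA htB
    rw [hA, Finset.mem_image] at htA
    rw [hB, Finset.mem_image] at htB
    obtain ⟨j, hj, hjt⟩ := htA
    obtain ⟨k, hk, hkt⟩ := htB
    rw [Finset.mem_range] at hj
    rw [Finset.mem_Ico] at hk
    rw [hookval j hj] at hjt
    have hiff : k < μ.colLen j ↔ j < μ.rowLen k := by
      rw [← YoungDiagram.mem_iff_lt_colLen, ← YoungDiagram.mem_iff_lt_rowLen]
    have := hranti i k (by omega)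
    have := hige j hj
    have := hcolle j
    omega
  have hcards : (A ∪ B).card = L + (n - 1 - i) := by
    rw [Finset.card_union_of_disjoint hdisj, hA, hB,
      Finset.card_image_of_injOn hinjA, Finset.card_image_of_injOn hinjB,
      Finset.card_range, Nat.card_Ico]
    omega
  have hun : A ∪ B = Icc 1 (L + (n - 1 - i)) := by
    apply Finset.eq_of_subset_of_card_le (Finset.union_subset hAsub hBsub)
    rw [hcards, Nat.card_Icc]
    omega
  have hfact : ∏ t ∈ Icc 1 (L + (n - 1 - i)), t = (L + (n - 1 - i)).factorial := by
    rw [← Finset.Ico_add_one_right_eq_Icc, Finset.prod_Ico_id_eq_factorial]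
  calc (L + (n - 1 - i)).factorial = ∏ t ∈ A ∪ B, t := by rw [hun, ← hfact]
    _ = (∏ t ∈ A, t) * ∏ t ∈ B, t := Finset.prod_union hdisj
    _ = _ := by
        rw [hA, hB, Finset.prod_image hinjA, Finset.prod_image hinjB]

lemma hook_prod_eq (μ : YoungDiagram) {n : ℕ} (hn : μ.colLen 0 ≤ n) :
    ∏ i ∈ range n, (μ.rowLen i + (n - 1 - i)).factorial
      = (∏ c ∈ μ.cells, hook μ c)
        * ∏ i ∈ range n, ∏ k ∈ Ico (i + 1) n,
            ((μ.rowLen i + (n - 1 - i)) - (μ.rowLen k + (n - 1 - k))) := by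
  rw [prod_cells μ hn (hook μ), ← Finset.prod_mul_distrib]
  exact Finset.prod_congr rfl fun i hi => row_factorial μ hn (mem_range.mp hi)


lemma mem_removables {μ : YoungDiagram} {c : ℕ × ℕ} :
    c ∈ removables μ ↔ c ∈ μ ∧ (c.1, c.2 + 1) ∉ μ ∧ (c.1 + 1, c.2) ∉ μ := by
  obtain ⟨i, j⟩ := c
  rw [removables, Finset.mem_filter, YoungDiagram.mem_cells]
  simp only
  have hcoe : (↑(μ.cells.erase (i, j)) : Set (ℕ × ℕ))
      = {d : ℕ × ℕ | d ∈ μ ∧ d ≠ (i, j)} := by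
    ext d
    simp only [Finset.coe_erase, Set.mem_diff, Set.mem_singleton_iff, Finset.mem_coe,
      YoungDiagram.mem_cells, Set.mem_setOf_eq]
  rw [hcoe]
  constructor
  · rintro ⟨hc, hls⟩
    refine ⟨hc, ?_, ?_⟩
    · intro hmem
      have h2 := hls (show ((i, j) : ℕ × ℕ) ≤ (i, j + 1) from
        Prod.mk_le_mk.mpr ⟨le_refl _, Nat.le_succ _⟩) ⟨hmem, by simp⟩
      exact h2.2 rfl
    · intro hmem
      have h2 := hls (show ((i, j) : ℕ × ℕ) ≤ (i + 1, j) from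
        Prod.mk_le_mk.mpr ⟨Nat.le_succ _, le_refl _⟩) ⟨hmem, by simp⟩
      exact h2.2 rfl
  · rintro ⟨hc, hr, hd⟩
    refine ⟨hc, ?_⟩
    rintro ⟨a, b⟩ ⟨p, q⟩ hxy hy
    obtain ⟨hyμ, hyc⟩ := hy
    rcases Prod.mk_le_mk.mp hxy with ⟨h1, h2⟩
    refine ⟨μ.isLowerSet hxy hyμ, ?_⟩
    intro heq
    have e1 : p = i := congrArg Prod.fst heq
    have e2 : q = j := congrArg Prod.snd heq
    have hne : i < a ∨ j < b := by
      by_contra hcon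
      push_neg at hcon
      exact hyc (by rw [Prod.mk.injEq]; omega)
    rcases hne with h | h
    · exact hd (μ.up_left_mem h (by omega) hyμ)
    · exact hr (μ.up_left_mem (by omega) h hyμ)

lemma removable_iff {μ : YoungDiagram} {i j : ℕ} :
    (i, j) ∈ removables μ ↔ j + 1 = μ.rowLen i ∧ μ.rowLen (i + 1) ≤ j := by
  rw [mem_removables]
  simp only [YoungDiagram.mem_iff_lt_rowLen]
  omega

lemma removables_eq (μ : YoungDiagram) {n : ℕ} (hn : μ.colLen 0 ≤ n) :
    removables μ = ((range n).filter (fun i => μ.rowLen (i + 1) < μ.rowLen i)).image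
      (fun i => (i, μ.rowLen i - 1)) := by
  ext ⟨i, j⟩
  rw [removable_iff, Finset.mem_image]
  constructor
  · rintro ⟨h1, h2⟩
    have hmem : (i, j) ∈ μ := YoungDiagram.mem_iff_lt_rowLen.mpr (by omega)
    have hin : i < n := lt_of_lt_of_le (cell_fst_lt hmem) hn
    exact ⟨i, Finset.mem_filter.mpr ⟨Finset.mem_range.mpr hin, by omega⟩, by
      rw [Prod.mk.injEq]; omega⟩
  · rintro ⟨i', hi', heq⟩
    rw [Finset.mem_filter, Finset.mem_range] at hi'
    injection heq with e1 e2
    subst e1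
    omega

lemma removeBox_cells {μ : YoungDiagram} {c : ℕ × ℕ} (hc : c ∈ removables μ) :
    (removeBox μ c).cells = μ.cells.erase c := by
  rw [removeBox, dif_pos (Finset.mem_filter.mp hc).2]

lemma rowLen_eq_of {ν : YoungDiagram} {k L : ℕ} (h : ∀ j, (k, j) ∈ ν ↔ j < L) :
    ν.rowLen k = L := by
  rcases Nat.lt_trichotomy (ν.rowLen k) L with h1 | h1 | h1
  · have := YoungDiagram.mem_iff_lt_rowLen.mp ((h _).mpr h1)
    omega
  · exact h1
  · have := (h L).mp (YoungDiagram.mem_iff_lt_rowLen.mpr h1)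
    omega

lemma removeBox_rowLen {μ : YoungDiagram} {i j : ℕ} (hc : (i, j) ∈ removables μ) (k : ℕ) :
    (removeBox μ (i, j)).rowLen k = if k = i then μ.rowLen i - 1 else μ.rowLen k := by
  obtain ⟨h1, h2⟩ := removable_iff.mp hc
  have hmem : ∀ a b, ((a, b) ∈ removeBox μ (i, j)) ↔ ((a, b) ≠ (i, j) ∧ (a, b) ∈ μ) := by
    intro a b
    rw [← YoungDiagram.mem_cells, removeBox_cells hc, Finset.mem_erase,
      YoungDiagram.mem_cells]
  apply rowLen_eq_of
  intro j'
  rw [hmem]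
  simp only [YoungDiagram.mem_iff_lt_rowLen, Ne, Prod.mk.injEq, not_and]
  split_ifs with hki
  · subst hki
    constructor
    · rintro ⟨hne, hlt⟩
      rcases Nat.lt_or_ge j' (μ.rowLen k - 1) with h | h
      · exact h
      · exfalso; exact hne rfl (by omega)
    · intro h; exact ⟨fun _ => by omega, by omega⟩
  · constructor
    · rintro ⟨_, hlt⟩; exact hlt
    · intro h; exact ⟨fun he => absurd he hki, h⟩

lemma colLen0_mono {μ ν : YoungDiagram} (h : ν.cells ⊆ μ.cells) :
    ν.colLen 0 ≤ μ.colLen 0 := by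
  by_contra hlt
  push_neg at hlt
  have hmem : ((μ.colLen 0, 0) : ℕ × ℕ) ∈ ν := YoungDiagram.mem_iff_lt_colLen.mpr hlt
  have := YoungDiagram.mem_iff_lt_colLen.mp
    ((YoungDiagram.mem_cells _).mp (h ((YoungDiagram.mem_cells _).mpr hmem)))
  omega

lemma hook_pos {μ : YoungDiagram} {c : ℕ × ℕ} (hc : c ∈ μ) : 0 < hook μ c := by
  rw [hook, Finset.card_pos]
  exact ⟨c, Finset.mem_filter.mpr ⟨(YoungDiagram.mem_cells _).mpr hc, Or.inl ⟨rfl, le_refl _⟩⟩⟩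

lemma H_ne_zero (μ : YoungDiagram) : H μ ≠ 0 := by
  rw [H]
  apply Finset.prod_ne_zero_iff.mpr
  intro c hc
  have := hook_pos ((YoungDiagram.mem_cells _).mp hc)
  exact Nat.cast_ne_zero.mpr (by omega)

lemma prod_range_split {M : Type*} [CommMonoid M] (g : ℕ → M) {r n : ℕ} (hr : r < n) :
    ∏ i ∈ range n, g i = g r * ((∏ i ∈ range r, g i) * ∏ i ∈ Ico (r + 1) n, g i) := by
  rw [Finset.range_eq_Ico, ← Finset.prod_Ico_consecutive g (Nat.zero_le r) (le_of_lt hr),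
    Finset.prod_eq_prod_Ico_succ_bot hr, ← Finset.range_eq_Ico]
  exact mul_left_comm _ _ _

lemma erase_range_split {r n : ℕ} (hr : r < n) :
    (range n).erase r = range r ∪ Ico (r + 1) n := by
  ext t
  simp only [Finset.mem_erase, Finset.mem_range, Finset.mem_union, Finset.mem_Ico]
  omega

lemma V_ratio {n r : ℕ} (hr : r < n) (β β' : ℕ → ℚ)
    (hβ' : ∀ k, k ≠ r → β' k = β k) (hβr : β' r = β r - 1) :
    (∏ i ∈ range n, ∏ k ∈ Ico (i + 1) n, (β' i - β' k))
        * ∏ k ∈ (range n).erase r, (β r - β k)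
      = (∏ i ∈ range n, ∏ k ∈ Ico (i + 1) n, (β i - β k))
        * ∏ k ∈ (range n).erase r, (β r - β k - 1) := by
  have hdisj : Disjoint (range r) (Ico (r + 1) n) := by
    rw [Finset.disjoint_left]
    intro t ht ht'
    rw [Finset.mem_range] at ht
    rw [Finset.mem_Ico] at ht'
    omega
  have hsplitV : ∀ γ : ℕ → ℚ,
      (∏ i ∈ range n, ∏ k ∈ Ico (i + 1) n, (γ i - γ k))
        = (∏ k ∈ Ico (r + 1) n, (γ r - γ k))
          * (((∏ i ∈ range r, (γ i - γ r)) * ∏ i ∈ range r,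
              ∏ k ∈ (Ico (i + 1) n).erase r, (γ i - γ k))
            * ∏ i ∈ Ico (r + 1) n, ∏ k ∈ Ico (i + 1) n, (γ i - γ k)) := by
    intro γ
    rw [prod_range_split (fun i => ∏ k ∈ Ico (i + 1) n, (γ i - γ k)) hr]
    congr 1
    congr 1
    rw [← Finset.prod_mul_distrib]
    apply Finset.prod_congr rfl
    intro i hi
    rw [Finset.mem_range] at hi
    rw [← Finset.mul_prod_erase (Ico (i + 1) n) (fun k => γ i - γ k)
      (Finset.mem_Ico.mpr ⟨by omega, hr⟩)]
  have hW : (∏ i ∈ range r, ∏ k ∈ (Ico (i + 1) n).erase r, (β' i - β' k))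
      = ∏ i ∈ range r, ∏ k ∈ (Ico (i + 1) n).erase r, (β i - β k) := by
    apply Finset.prod_congr rfl
    intro i hi
    apply Finset.prod_congr rfl
    intro k hk
    rw [Finset.mem_range] at hi
    rw [Finset.mem_erase] at hk
    rw [hβ' i (by omega), hβ' k hk.1]
  have hW2 : (∏ i ∈ Ico (r + 1) n, ∏ k ∈ Ico (i + 1) n, (β' i - β' k))
      = ∏ i ∈ Ico (r + 1) n, ∏ k ∈ Ico (i + 1) n, (β i - β k) := by
    apply Finset.prod_congr rfl
    intro i hi
    apply Finset.prod_congr rfl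
    intro k hk
    rw [Finset.mem_Ico] at hi hk
    rw [hβ' i (by omega), hβ' k (by omega)]
  have hG1 : (∏ k ∈ Ico (r + 1) n, (β' r - β' k)) = ∏ k ∈ Ico (r + 1) n, (β r - β k - 1) := by
    apply Finset.prod_congr rfl
    intro k hk
    rw [Finset.mem_Ico] at hk
    rw [hβ' k (by omega), hβr]
    ring
  have hG2 : (∏ i ∈ range r, (β' i - β' r)) = ∏ i ∈ range r, (β i - β r + 1) := by
    apply Finset.prod_congr rfl
    intro i hi
    rw [Finset.mem_range] at hi
    rw [hβ' i (by omega), hβr]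
    ring
  rw [hsplitV β', hsplitV β, hW, hW2, hG1, hG2, erase_range_split hr,
    Finset.prod_union hdisj, Finset.prod_union hdisj]
  set W1 := ∏ i ∈ range r, ∏ k ∈ (Ico (i + 1) n).erase r, (β i - β k)
  set W2 := ∏ i ∈ Ico (r + 1) n, ∏ k ∈ Ico (i + 1) n, (β i - β k)
  have key : (∏ k ∈ Ico (r + 1) n, (β r - β k - 1)) * (∏ i ∈ range r, (β i - β r + 1))
        * ((∏ k ∈ range r, (β r - β k)) * ∏ k ∈ Ico (r + 1) n, (β r - β k))
      = (∏ k ∈ Ico (r + 1) n, (β r - β k)) * (∏ i ∈ range r, (β i - β r))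
        * ((∏ k ∈ range r, (β r - β k - 1)) * ∏ k ∈ Ico (r + 1) n, (β r - β k - 1)) := by
    have e1 : (∏ i ∈ range r, (β i - β r + 1)) * (∏ k ∈ range r, (β r - β k))
        = (∏ i ∈ range r, (β i - β r)) * (∏ k ∈ range r, (β r - β k - 1)) := by
      rw [← Finset.prod_mul_distrib, ← Finset.prod_mul_distrib]
      apply Finset.prod_congr rfl
      intro i _
      ring
    calc (∏ k ∈ Ico (r + 1) n, (β r - β k - 1)) * (∏ i ∈ range r, (β i - β r + 1))
        * ((∏ k ∈ range r, (β r - β k)) * ∏ k ∈ Ico (r + 1) n, (β r - β k))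
        = ((∏ i ∈ range r, (β i - β r + 1)) * (∏ k ∈ range r, (β r - β k)))
          * ((∏ k ∈ Ico (r + 1) n, (β r - β k - 1)) * ∏ k ∈ Ico (r + 1) n, (β r - β k)) := by
            ring
      _ = ((∏ i ∈ range r, (β i - β r)) * (∏ k ∈ range r, (β r - β k - 1)))
          * ((∏ k ∈ Ico (r + 1) n, (β r - β k - 1)) * ∏ k ∈ Ico (r + 1) n, (β r - β k)) := by
            rw [e1]
      _ = _ := by ring
  calc (∏ k ∈ Ico (r + 1) n, (β r - β k - 1)) * (((∏ i ∈ range r, (β i - β r + 1)) * W1) * W2)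
      * ((∏ k ∈ range r, (β r - β k)) * ∏ k ∈ Ico (r + 1) n, (β r - β k))
      = ((∏ k ∈ Ico (r + 1) n, (β r - β k - 1)) * (∏ i ∈ range r, (β i - β r + 1))
        * ((∏ k ∈ range r, (β r - β k)) * ∏ k ∈ Ico (r + 1) n, (β r - β k))) * (W1 * W2) := by
        ring
    _ = ((∏ k ∈ Ico (r + 1) n, (β r - β k)) * (∏ i ∈ range r, (β i - β r))
        * ((∏ k ∈ range r, (β r - β k - 1)) * ∏ k ∈ Ico (r + 1) n, (β r - β k - 1)))
          * (W1 * W2) := by rw [key]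
    _ = _ := by ring

def bval (μ : YoungDiagram) (n k : ℕ) : ℕ := μ.rowLen k + (n - 1 - k)

lemma bval_lt {μ : YoungDiagram} {n i k : ℕ} (hik : i < k) (hk : k < n) :
    bval μ n k < bval μ n i := by
  have := μ.rowLen_anti i k (le_of_lt hik)
  rw [bval, bval]
  omega

lemma H_eq (μ : YoungDiagram) {n : ℕ} (hn : μ.colLen 0 ≤ n) :
    H μ * ∏ i ∈ range n, ∏ k ∈ Ico (i + 1) n, ((bval μ n i : ℚ) - (bval μ n k : ℚ))
      = ∏ i ∈ range n, ((bval μ n i).factorial : ℚ) := by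
  have hcast := congrArg (Nat.cast : ℕ → ℚ) (hook_prod_eq μ hn)
  push_cast at hcast
  simp only [bval, H]
  rw [hcast]
  congr 1
  apply Finset.prod_congr rfl
  intro i hi
  apply Finset.prod_congr rfl
  intro k hk
  rw [Finset.mem_range] at hi
  rw [Finset.mem_Ico] at hk
  have hlt := bval_lt (μ := μ) (n := n) (i := i) (k := k) (by omega) hk.2
  rw [bval, bval] at hlt
  rw [Nat.cast_sub (le_of_lt hlt)]

lemma sum_H_ratio (μ : YoungDiagram) :
    ∑ c ∈ removables μ, H μ / H (removeBox μ c) = (μ.card : ℚ) := by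
  set n := μ.colLen 0 with hn
  have hrowlen_n : μ.rowLen n = 0 := by
    by_contra h
    have h0 : (n, 0) ∈ μ := YoungDiagram.mem_iff_lt_rowLen.mpr (by omega)
    have := YoungDiagram.mem_iff_lt_colLen.mp h0
    omega
  have hrow_pos : ∀ r, r < n → 0 < μ.rowLen r := fun r hr =>
    YoungDiagram.mem_iff_lt_rowLen.mp (YoungDiagram.mem_iff_lt_colLen.mpr hr)
  set β : ℕ → ℚ := fun k => (bval μ n k : ℚ) with hβ
  have hβlt : ∀ i k, i < k → k < n → β k < β i := by
    intro i k h1 h2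
    exact_mod_cast Nat.cast_lt.mpr (bval_lt h1 h2)
  have hβne : ∀ r k, r < n → k < n → k ≠ r → β r - β k ≠ 0 := by
    intro r k hr hk hne
    rcases Nat.lt_or_ge k r with h | h
    · have := hβlt k r h hr; intro hc; nlinarith
    · have := hβlt r k (by omega) hk; intro hc; nlinarith
  -- per-corner term
  have hterm : ∀ r, r < n → μ.rowLen (r + 1) < μ.rowLen r →
      H μ / H (removeBox μ (r, μ.rowLen r - 1))
        = β r * ∏ k ∈ (range n).erase r, ((β r - β k - 1) / (β r - β k)) := by
    intro r hrn hcond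
    have hc : (r, μ.rowLen r - 1) ∈ removables μ := by
      rw [removable_iff]
      constructor <;> omega
    set μ' := removeBox μ (r, μ.rowLen r - 1) with hμ'
    have hcells : μ'.cells = μ.cells.erase (r, μ.rowLen r - 1) := removeBox_cells hc
    have hn' : μ'.colLen 0 ≤ n := by
      apply colLen0_mono
      rw [hcells]
      exact Finset.erase_subset _ _
    have hrl : ∀ k, μ'.rowLen k = if k = r then μ.rowLen r - 1 else μ.rowLen k :=
      removeBox_rowLen hc
    set β' : ℕ → ℚ := fun k => (bval μ' n k : ℚ) with hβ'
    have hb'ne : ∀ k, k ≠ r → β' k = β k := by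
      intro k hk
      simp only [hβ', hβ, bval, hrl k, if_neg hk]
    have hb'r : β' r = β r - 1 := by
      have h1 : bval μ' n r + 1 = bval μ n r := by
        have := hrow_pos r hrn
        have h2 := hrl r
        rw [if_pos rfl] at h2
        simp only [bval, h2]
        omega
      have := congrArg (Nat.cast : ℕ → ℚ) h1
      push_cast at this
      simp only [hβ', hβ]
      linarith
    have Heq1 := H_eq μ (le_refl n)
    have Heq2 := H_eq μ' hn'
    set Vq := ∏ i ∈ range n, ∏ k ∈ Ico (i + 1) n, (β i - β k) with hVq
    set Vq' := ∏ i ∈ range n, ∏ k ∈ Ico (i + 1) n, (β' i - β' k) with hVq'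
    set P := ∏ k ∈ (range n).erase r, (β r - β k) with hP
    set P' := ∏ k ∈ (range n).erase r, (β r - β k - 1) with hP'
    have hVratio : Vq' * P = Vq * P' := V_ratio hrn β β' hb'ne hb'r
    have hFq : (∏ i ∈ range n, ((bval μ n i).factorial : ℚ))
        = β r * ∏ i ∈ range n, ((bval μ' n i).factorial : ℚ) := by
      rw [← Finset.mul_prod_erase (range n) (fun i => ((bval μ n i).factorial : ℚ))
        (Finset.mem_range.mpr hrn),
        ← Finset.mul_prod_erase (range n) (fun i => ((bval μ' n i).factorial : ℚ))
        (Finset.mem_range.mpr hrn)]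
      have hfac : ((bval μ n r).factorial : ℚ) = β r * ((bval μ' n r).factorial : ℚ) := by
        have h1 : bval μ' n r + 1 = bval μ n r := by
          have := hrow_pos r hrn
          have h2 := hrl r
          rw [if_pos rfl] at h2
          simp only [bval, h2]
          omega
        rw [← h1, Nat.factorial_succ]
        push_cast
        simp only [hβ, ← h1]
        push_cast
        ring
      rw [hfac]
      have herase : ∏ i ∈ (range n).erase r, ((bval μ n i).factorial : ℚ)
          = ∏ i ∈ (range n).erase r, ((bval μ' n i).factorial : ℚ) := by
        apply Finset.prod_congr rfl
        intro k hk
        rw [Finset.mem_erase] at hk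
        simp only [bval, hrl k, if_neg hk.1]
      rw [herase]
      ring
    have hVqNZ : Vq ≠ 0 := by
      rw [hVq]
      apply Finset.prod_ne_zero_iff.mpr
      intro i hi
      apply Finset.prod_ne_zero_iff.mpr
      intro k hk
      rw [Finset.mem_range] at hi
      rw [Finset.mem_Ico] at hk
      exact hβne i k hi hk.2 (by omega)
    have hPNZ : P ≠ 0 := by
      rw [hP]
      apply Finset.prod_ne_zero_iff.mpr
      intro k hk
      rw [Finset.mem_erase, Finset.mem_range] at hk
      exact hβne r k hrn hk.2 hk.1
    have hH'NZ : H μ' ≠ 0 := H_ne_zero μ'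
    have key : H μ * P = β r * H μ' * P' := by
      apply mul_left_cancel₀ hVqNZ
      calc Vq * (H μ * P) = (H μ * Vq) * P := by ring
        _ = (β r * (H μ' * Vq')) * P := by rw [Heq1, hFq, ← Heq2]
        _ = β r * H μ' * (Vq' * P) := by ring
        _ = β r * H μ' * (Vq * P') := by rw [hVratio]
        _ = Vq * (β r * H μ' * P') := by ring
    rw [show ∏ k ∈ (range n).erase r, ((β r - β k - 1) / (β r - β k)) = P' / P from by
      rw [hP, hP', ← Finset.prod_div_distrib]]
    field_simp
    linear_combination key
  -- zero for non-corners
  have hzero : ∀ r, r ∈ range n → ¬(μ.rowLen (r + 1) < μ.rowLen r) →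
      β r * ∏ k ∈ (range n).erase r, ((β r - β k - 1) / (β r - β k)) = 0 := by
    intro r hr hncond
    rw [Finset.mem_range] at hr
    have hanti := μ.rowLen_anti r (r + 1) (by omega)
    have heq : μ.rowLen (r + 1) = μ.rowLen r := by omega
    have hr1 : r + 1 < n := by
      rcases Nat.lt_or_ge (r + 1) n with h | h
      · exact h
      · exfalso
        have he : r + 1 = n := by omega
        have h0 := hrow_pos r hr
        rw [he, hrowlen_n] at heq
        omega
    have hb : bval μ n r = bval μ n (r + 1) + 1 := by
      rw [bval, bval, heq]
      omega
    have hfac : β r - β (r + 1) - 1 = 0 := by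
      have := congrArg (Nat.cast : ℕ → ℚ) hb
      push_cast at this
      simp only [hβ]
      linarith
    rw [Finset.prod_eq_zero (Finset.mem_erase.mpr ⟨by omega, Finset.mem_range.mpr hr1⟩)
      (by rw [hfac, zero_div]), mul_zero]
  have hinjOn : Set.InjOn β (range n) := by
    intro i hi j hj heq
    simp only [Finset.coe_range, Set.mem_Iio] at hi hj
    have hbe : bval μ n i = bval μ n j := Nat.cast_inj.mp heq
    rcases lt_trichotomy i j with h | h | h
    · have := bval_lt (μ := μ) h hj; omega
    · exact h
    · have := bval_lt (μ := μ) h hi; omega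
  rw [removables_eq μ (le_refl n),
    Finset.sum_image (fun x _ y _ hxy => congrArg Prod.fst hxy)]
  have step1 : ∑ r ∈ (range n).filter (fun i => μ.rowLen (i + 1) < μ.rowLen i),
        H μ / H (removeBox μ (r, μ.rowLen r - 1))
      = ∑ r ∈ (range n).filter (fun i => μ.rowLen (i + 1) < μ.rowLen i),
        β r * ∏ k ∈ (range n).erase r, ((β r - β k - 1) / (β r - β k)) := by
    apply Finset.sum_congr rfl
    intro r hr
    rw [Finset.mem_filter, Finset.mem_range] at hr
    exact hterm r hr.1 hr.2
  have step2 : ∑ r ∈ (range n).filter (fun i => μ.rowLen (i + 1) < μ.rowLen i),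
        β r * ∏ k ∈ (range n).erase r, ((β r - β k - 1) / (β r - β k))
      = ∑ r ∈ range n, β r * ∏ k ∈ (range n).erase r, ((β r - β k - 1) / (β r - β k)) := by
    apply Finset.sum_subset (Finset.filter_subset _ _)
    intro r hr hnr
    refine hzero r hr (fun hc => hnr ?_)
    rw [Finset.mem_filter]
    exact ⟨hr, hc⟩
  rw [step1, step2, sum_hook_ratio_identity (range n) β hinjOn]
  have hβsum : ∑ i ∈ range n, β i = (μ.card : ℚ) + ∑ i ∈ range n, (i : ℚ) := by
    simp only [hβ]
    rw [← Nat.cast_sum, ← Nat.cast_sum]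
    rw [show ∑ i ∈ range n, bval μ n i = μ.card + ∑ i ∈ range n, i from by
      simp only [bval]
      rw [Finset.sum_add_distrib, ← card_eq_sum_rowLens' μ (le_refl n),
        Finset.sum_range_reflect (fun i => i) n]]
    push_cast
    ring
  have hgauss : (∑ i ∈ range n, (i : ℚ)) * 2 = (n : ℚ) * ((n : ℚ) - 1) := by
    cases n with
    | zero => simp
    | succ m =>
      have hg := Finset.sum_range_id_mul_two (m + 1)
      have := congrArg (Nat.cast : ℕ → ℚ) hg
      push_cast at this
      rw [this]
      push_cast
      ring
  rw [Finset.card_range, hβsum]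
  linarith


lemma H_bot : H (⊥ : YoungDiagram) = 1 := by
  rw [H, YoungDiagram.cells_bot, Finset.prod_empty]

lemma card_removeBox {μ : YoungDiagram} {c : ℕ × ℕ} (hc : c ∈ removables μ) :
    (removeBox μ c).card = μ.card - 1 := by
  show (removeBox μ c).cells.card = _
  rw [removeBox_cells hc, Finset.card_erase_of_mem (Finset.mem_filter.mp hc).1]

lemma card_pos_of_removable {μ : YoungDiagram} {c : ℕ × ℕ} (hc : c ∈ removables μ) :
    0 < μ.card :=
  Finset.card_pos.mpr ⟨c, (Finset.mem_filter.mp hc).1⟩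

lemma eq_bot_of_card_eq_zero {μ : YoungDiagram} (h : μ.card = 0) : μ = ⊥ := by
  ext c
  rw [Finset.card_eq_zero] at h
  show c ∈ μ.cells ↔ c ∈ (⊥ : YoungDiagram).cells
  rw [h, YoungDiagram.cells_bot]

lemma Dminus_inv (a : ℚ) (μ : YoungDiagram) : Dminus (fun l => a / H l) μ = 0 := by
  rw [Dminus]

  have hsum : ∑ c ∈ removables μ, a / H (removeBox μ c)
      = (μ.card : ℚ) * (a / H μ) := by
    have h := sum_H_ratio μ
    calc ∑ c ∈ removables μ, a / H (removeBox μ c)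
        = ∑ c ∈ removables μ, (a / H μ) * (H μ / H (removeBox μ c)) := by
          apply Finset.sum_congr rfl
          intro c _
          rw [div_mul_div_comm, mul_comm a (H μ), mul_div_mul_left _ _ (H_ne_zero μ)]
      _ = (a / H μ) * ∑ c ∈ removables μ, H μ / H (removeBox μ c) := by
          rw [Finset.mul_sum]
      _ = (a / H μ) * (μ.card : ℚ) := by rw [h]
      _ = (μ.card : ℚ) * (a / H μ) := by ring
  rw [hsum]
  ring

theorem Dminus_eq_zero_iff' (g : YoungDiagram → ℚ) :
    (∀ l : YoungDiagram, Dminus g l = 0) ↔ ∃ a : ℚ, ∀ l : YoungDiagram, g l = a / H l := by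
  constructor
  · intro hg
    refine ⟨g ⊥, ?_⟩
    suffices hN : ∀ N (l : YoungDiagram), l.card = N → g l = g ⊥ / H l by
      intro l
      exact hN l.card l rfl
    intro N
    induction N using Nat.strong_induction_on with
    | _ N ih =>
      intro l hl
      rcases Nat.eq_zero_or_pos N with h0 | hpos
      · have hbot : l = ⊥ := eq_bot_of_card_eq_zero (by omega)
        subst hbot
        rw [H_bot, div_one]
      · have hD := hg l
        have hD2 := Dminus_inv (g ⊥) l
        rw [Dminus] at hD hD2

        have hsum : ∑ c ∈ removables l, g (removeBox l c)
            = ∑ c ∈ removables l, g ⊥ / H (removeBox l c) := by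
          apply Finset.sum_congr rfl
          intro c hc
          exact ih (N - 1) (by omega) (removeBox l c) (by rw [card_removeBox hc, hl])
        rw [hsum] at hD
        have hcard : ((l.card : ℚ)) ≠ 0 := by
          rw [hl]
          exact_mod_cast Nat.cast_ne_zero.mpr (by omega)
        apply mul_left_cancel₀ hcard
        linarith
  · rintro ⟨a, ha⟩ l
    have h1 : Dminus g l = Dminus (fun m => a / H m) l := by
      rw [Dminus, Dminus]

      rw [ha l]
      congr 1
      exact Finset.sum_congr rfl fun c _ => ha _
    rw [h1]
    exact Dminus_inv a l


/-- `D⁻g(λ) = 0` for every partition `λ` iff `g(λ) = a/H_λ` for some constant `a`. -/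
theorem Dminus_eq_zero_iff (g : YoungDiagram → ℚ) :
    (∀ l : YoungDiagram, Dminus g l = 0) ↔ ∃ a : ℚ, ∀ l : YoungDiagram, g l = a / H l := by
  exact Dminus_eq_zero_iff' g

end HookDiff
end

section
/- Let g be a rational-valued function of partitions, k a nonnegative integer, and r an integer. Then for every partition λ with n = |λ|: D^k( C(n,r) · g(λ) ) = Σ_{i=0}^{k} C(k,i) · C(n+i, r−k+i) · D^i g(λ), where C(·,·) denotes binomial coefficients (zero when the lower index is negative). Here C(n,r)·g(λ) denotes the function of partitions λ ↦ C(|λ|, r)·g(λ). -/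
open scoped Classical

namespace HookDiff

/-- Binomial coefficient `C(n, r)` with integer lower index, equal to `0` when `r < 0`. -/
def ichoose (n : ℕ) (r : ℤ) : ℚ :=
  if 0 ≤ r then (n.choose r.toNat : ℚ) else 0

lemma ichoose_succ (n : ℕ) (r : ℤ) :
    ichoose (n + 1) r = ichoose n r + ichoose n (r - 1) := by
  unfold ichoose
  rcases lt_trichotomy r 0 with h | h | h
  · rw [if_neg (by omega), if_neg (by omega), if_neg (by omega)]; ring
  · subst h; norm_num
  · obtain ⟨m, rfl⟩ : ∃ m : ℕ, r = (m : ℤ) + 1 := ⟨(r - 1).toNat, by omega⟩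
    rw [if_pos (by omega), if_pos (by omega), if_pos (by omega)]
    have h1 : ((m : ℤ) + 1).toNat = m + 1 := by omega
    have h2 : ((m : ℤ) + 1 - 1).toNat = m := by omega
    rw [h1, h2, Nat.choose_succ_succ]
    push_cast; ring

lemma card_addBox (μ : YoungDiagram) (c : ℕ × ℕ) (hc : c ∈ addables μ) :
    (addBox μ c).card = μ.card + 1 := by
  rw [addables, Finset.mem_filter] at hc
  obtain ⟨-, hnot, hls⟩ := hc
  rw [addBox, dif_pos hls]
  show (insert c μ.cells).card = μ.cells.card + 1
  rw [Finset.card_insert_of_notMem (by rwa [YoungDiagram.mem_cells] )]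

lemma D_add (f h : YoungDiagram → ℚ) :
    D (fun t => f t + h t) = fun t => D f t + D h t := by
  funext t
  unfold D
  rw [Finset.sum_add_distrib]
  ring

lemma iterate_D_add (k : ℕ) (f h : YoungDiagram → ℚ) (l : YoungDiagram) :
    D^[k] (fun t => f t + h t) l = D^[k] f l + D^[k] h l := by
  induction k generalizing f h with
  | zero => simp
  | succ k ih =>
    rw [Function.iterate_succ_apply, Function.iterate_succ_apply,
      Function.iterate_succ_apply, D_add]
    exact ih _ _

lemma key (k : ℕ) (A x y : ℕ → ℚ) (hP : ∀ i, x (i + 1) = y i + x i) :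
    (∑ i ∈ Finset.range (k + 1), (k.choose i : ℚ) * x i * (A i + A (i + 1)))
      + ∑ i ∈ Finset.range (k + 1), (k.choose i : ℚ) * y i * A (i + 1)
    = ∑ i ∈ Finset.range (k + 2), ((k + 1).choose i : ℚ) * x i * A i := by
  have hL1 : (∑ i ∈ Finset.range (k + 1), (k.choose i : ℚ) * x i * A i)
      = x 0 * A 0 + ∑ i ∈ Finset.range (k + 1), (k.choose (i + 1) : ℚ) * x (i + 1) * A (i + 1) := by
    rw [Finset.sum_range_succ' (fun i => (k.choose i : ℚ) * x i * A i) k]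
    rw [Finset.sum_range_succ (fun i => (k.choose (i + 1) : ℚ) * x (i + 1) * A (i + 1)) k]
    simp [Nat.choose_succ_self]
    ring
  have hsplit : (∑ i ∈ Finset.range (k + 1), (k.choose i : ℚ) * x i * (A i + A (i + 1)))
      = (∑ i ∈ Finset.range (k + 1), (k.choose i : ℚ) * x i * A i)
        + ∑ i ∈ Finset.range (k + 1), (k.choose i : ℚ) * x i * A (i + 1) := by
    rw [← Finset.sum_add_distrib]
    exact Finset.sum_congr rfl fun i _ => by ring
  rw [hsplit, hL1]
  rw [Finset.sum_range_succ' (fun i => ((k + 1).choose i : ℚ) * x i * A i) (k + 1)]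
  simp only [Nat.choose_zero_right, Nat.cast_one, one_mul]
  have hcomb : (∑ i ∈ Finset.range (k + 1), (k.choose (i + 1) : ℚ) * x (i + 1) * A (i + 1))
      + (∑ i ∈ Finset.range (k + 1), (k.choose i : ℚ) * x i * A (i + 1))
      + (∑ i ∈ Finset.range (k + 1), (k.choose i : ℚ) * y i * A (i + 1))
      = ∑ i ∈ Finset.range (k + 1), ((k + 1).choose (i + 1) : ℚ) * x (i + 1) * A (i + 1) := by
    rw [← Finset.sum_add_distrib, ← Finset.sum_add_distrib]
    refine Finset.sum_congr rfl fun i _ => ?_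
    rw [Nat.choose_succ_succ, hP i]
    push_cast; ring
  linarith [hcomb]

lemma D_binom (g : YoungDiagram → ℚ) (r : ℤ) :
    D (fun t => ichoose t.card r * g t)
      = fun t => ichoose t.card (r - 1) * (g t + D g t) + ichoose t.card r * D g t := by
  funext t
  have h1 : ∀ c ∈ addables t,
      ichoose (addBox t c).card r * g (addBox t c)
        = ichoose (t.card + 1) r * g (addBox t c) := fun c hc => by rw [card_addBox t c hc]
  have h2 : ∑ c ∈ addables t, g (addBox t c) = D g t + g t := by unfold D; ring
  calc D (fun t => ichoose t.card r * g t) t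
      = (∑ c ∈ addables t, ichoose (addBox t c).card r * g (addBox t c))
          - ichoose t.card r * g t := rfl
    _ = (∑ c ∈ addables t, ichoose (t.card + 1) r * g (addBox t c))
          - ichoose t.card r * g t := by rw [Finset.sum_congr rfl h1]
    _ = ichoose (t.card + 1) r * (D g t + g t) - ichoose t.card r * g t := by
          rw [← Finset.mul_sum, h2]
    _ = _ := by rw [ichoose_succ]; ring

/-- `D^k(C(n,r)·g(λ)) = Σ_{i=0}^{k} C(k,i) C(n+i, r−k+i) D^i g(λ)` with `n = |λ|`,
for any integer `r` (binomial coefficients with negative lower index being `0`). -/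
theorem Dk_binomial_mul (g : YoungDiagram → ℚ) (k : ℕ) (r : ℤ) (l : YoungDiagram) :
    D^[k] (fun t => ichoose t.card r * g t) l
      = ∑ i ∈ Finset.range (k + 1),
          (k.choose i : ℚ) * ichoose (l.card + i) (r - k + i) * D^[i] g l := by
  induction k generalizing g r with
  | zero => simp
  | succ k ih =>
    rw [Function.iterate_succ_apply, D_binom,
      show (fun t => ichoose t.card (r - 1) * (g t + D g t) + ichoose t.card r * D g t)
        = fun t => (fun s => ichoose s.card (r - 1) * (fun u => g u + D g u) s) t
            + (fun s => ichoose s.card r * D g s) t from rfl,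
      iterate_D_add, ih, ih]
    have hA : ∀ i, D^[i] (fun u => g u + D g u) l = D^[i] g l + D^[i + 1] g l := by
      intro i
      rw [iterate_D_add, Function.iterate_succ_apply]
    have hDg : ∀ i, D^[i] (D g) l = D^[i + 1] g l := by
      intro i; rw [Function.iterate_succ_apply]
    simp only [hA, hDg]
    have := key k (fun i => D^[i] g l)
      (fun i => ichoose (l.card + i) (r - 1 - k + i))
      (fun i => ichoose (l.card + i) (r - k + i))
      (fun i => by
        show ichoose (l.card + (i + 1)) (r - 1 - (k : ℤ) + ((i + 1 : ℕ) : ℤ))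
          = ichoose (l.card + i) (r - k + i) + ichoose (l.card + i) (r - 1 - k + i)
        have e1 : l.card + (i + 1) = (l.card + i) + 1 := by omega
        have e2 : r - 1 - (k : ℤ) + ((i + 1 : ℕ) : ℤ) = r - k + i := by push_cast; ring
        have e3 : r - (k : ℤ) + i - 1 = r - 1 - k + i := by ring
        rw [e1, e2, ichoose_succ, e3])
    calc _ = (∑ i ∈ Finset.range (k + 1),
            (k.choose i : ℚ) * ichoose (l.card + i) (r - 1 - k + i) * (D^[i] g l + D^[i+1] g l))
          + ∑ i ∈ Finset.range (k + 1),
            (k.choose i : ℚ) * ichoose (l.card + i) (r - k + i) * D^[i+1] g l := rfl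
      _ = ∑ i ∈ Finset.range (k + 2),
            ((k + 1).choose i : ℚ) * ichoose (l.card + i) (r - 1 - k + i) * D^[i] g l := this
      _ = _ := by
          refine Finset.sum_congr rfl fun i _ => ?_
          have : r - 1 - (k : ℤ) + i = r - (k + 1 : ℕ) + i := by push_cast; ring
          rw [this]

end HookDiff
end
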